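/- Let π be a group, G a profinite group (a compact Hausdorff totally disconnected topological group), ρ : π → G a group homomorphism with dense range, 𝔘 an ultrafilter on ℕ, and std : *π → G the standardization map (the unique group homomorphism such that for every sequence x : ℕ → π, ρ ∘ x converges to std(⟦x⟧) along 𝔘). Then the kernel of std equals the intersection ⋂ *(ρ⁻¹(U)), taken over all open normal subgroups U of G, of the subgroups *(ρ⁻¹(U)) of *π. -/

import Mathlib

open Filter

/-- For a subgroup `H ≤ G`, the subgroup `*H` of the ultrapower `*G = Germ ↑𝔘 G`
consisting of germs admitting a representative all of whose values lie in `H`. -/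
def starSubgroup (𝔘 : Ultrafilter ℕ) {G : Type*} [Group G] (H : Subgroup G) :
    Subgroup (Filter.Germ (𝔘 : Filter ℕ) G) where
  carrier := { x | ∃ f : ℕ → G, (∀ i, f i ∈ H) ∧ x = ↑f }
  one_mem' := ⟨fun _ => 1, fun _ => H.one_mem, rfl⟩
  mul_mem' := by
    rintro x y ⟨f, hf, rfl⟩ ⟨g, hg, rfl⟩
    exact ⟨f * g, fun i => H.mul_mem (hf i) (hg i), (Filter.Germ.coe_mul f g).symm⟩
  inv_mem' := by
    rintro x ⟨f, hf, rfl⟩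
    exact ⟨f⁻¹, fun i => H.inv_mem (hf i), (Filter.Germ.coe_inv f).symm⟩

/-- In a profinite group, an element lying in every open normal subgroup is trivial. -/
lemma eq_one_of_mem_openNormal {G : Type*} [Group G] [TopologicalSpace G]
    [IsTopologicalGroup G] [CompactSpace G] [T2Space G] [TotallyDisconnectedSpace G]
    {g : G} (h : ∀ U : Subgroup G, U.Normal → IsOpen (U : Set G) → g ∈ U) : g = 1 := by
  by_contra hg
  obtain ⟨W, hW, h1W, hWg⟩ :
      ∃ W : Set G, IsClopen W ∧ (1 : G) ∈ W ∧ W ⊆ {g}ᶜ :=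
    compact_exists_isClopen_in_isOpen (isOpen_compl_singleton) (by simpa using Ne.symm hg)
  obtain ⟨H, hH⟩ := IsTopologicalGroup.exist_openNormalSubgroup_sub_clopen_nhds_of_one hW h1W
  exact hWg (hH (h H.toSubgroup H.isNormal' H.isOpen')) rfl

/-- **The fundamental germ as a kernel.**  If `G` is a profinite group, `ρ : π → G` has
dense range, and `std : *π → G` is the standardization map, then the kernel of `std`
equals the intersection `⋂ *(ρ⁻¹ U)` over all open normal subgroups `U ≤ G`. -/
theorem ker_standardization_eq_iInf (π G : Type*) [Group π] [Group G]
    [TopologicalSpace G] [IsTopologicalGroup G] [CompactSpace G] [T2Space G]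
    [TotallyDisconnectedSpace G]
    (ρ : π →* G) (hρ : DenseRange ρ) (𝔘 : Ultrafilter ℕ)
    (std : Filter.Germ (𝔘 : Filter ℕ) π →* G)
    (hstd : ∀ x : ℕ → π, Filter.Tendsto (ρ ∘ x) (𝔘 : Filter ℕ) (nhds (std ↑x))) :
    std.ker =
      ⨅ (U : Subgroup G) (_ : U.Normal) (_ : IsOpen (U : Set G)),
        starSubgroup 𝔘 (U.comap ρ) := by
  classical
  ext x
  simp only [MonoidHom.mem_ker, Subgroup.mem_iInf]
  constructor
  · intro hx U hN hO
    induction x using Filter.Germ.inductionOn with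
    | h f =>
      have htend := hstd f
      rw [hx] at htend
      have hev : ∀ᶠ i in (𝔘 : Filter ℕ), ρ (f i) ∈ U :=
        htend (hO.mem_nhds U.one_mem)
      refine ⟨fun i => if ρ (f i) ∈ U then f i else 1, fun i => ?_, ?_⟩
      · by_cases h : ρ (f i) ∈ U
        · simpa [h, Subgroup.mem_comap] using h
        · simpa [h, Subgroup.mem_comap] using U.one_mem
      · exact (Filter.Germ.coe_eq.mpr (hev.mono fun i hi => by simp [hi])).symm
  · intro hx
    refine eq_one_of_mem_openNormal fun U hN hO => ?_
    obtain ⟨g, hg, rfl⟩ := hx U hN hO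
    exact (U.isClosed_of_isOpen hO).mem_of_tendsto (hstd g)
      (Filter.Eventually.of_forall fun i => hg i)
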